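/- Let L = F₂(a,b) ⋊ ℤ where the generator c of ℤ acts by c·a·c⁻¹ = a and c·b·c⁻¹ = a⁻²b. Then the kernel N of the homomorphism L → ℤ/2 sending a ↦ 1, b ↦ 0, c ↦ 0 is an index-2 subgroup of L admitting the presentation ⟨c, b, x, t | cxc⁻¹ = x, ctc⁻¹ = x⁻¹t, cbc⁻¹ = x⁻¹b⟩. -/

import Mathlib

namespace Stmt15

-- generators of the presentation of N: 0 ↦ c, 1 ↦ b, 2 ↦ x, 3 ↦ t
private abbrev c : FreeGroup (Fin 4) := FreeGroup.of 0
private abbrev b : FreeGroup (Fin 4) := FreeGroup.of 1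
private abbrev x : FreeGroup (Fin 4) := FreeGroup.of 2
private abbrev t : FreeGroup (Fin 4) := FreeGroup.of 3

/-- Relations of `⟨c, b, x, t | cxc⁻¹ = x, ctc⁻¹ = x⁻¹t, cbc⁻¹ = x⁻¹b⟩`. -/
def relsN : Set (FreeGroup (Fin 4)) :=
  {c * x * c⁻¹ * x⁻¹, c * t * c⁻¹ * (x⁻¹ * t)⁻¹, c * b * c⁻¹ * (x⁻¹ * b)⁻¹}

abbrev P := PresentedGroup relsN
def C0 : P := PresentedGroup.of 0
def B0 : P := PresentedGroup.of 1
def X0 : P := PresentedGroup.of 2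
def T0 : P := PresentedGroup.of 3

lemma relP {r : FreeGroup (Fin 4)} (hr : r ∈ relsN) : PresentedGroup.mk relsN r = 1 :=
  (QuotientGroup.eq_one_iff _).2 (Subgroup.subset_normalClosure hr)

lemma R1 : C0 * X0 * C0⁻¹ = X0 := by
  have h := relP (show c * x * c⁻¹ * x⁻¹ ∈ relsN from by left; rfl)
  simp only [map_mul, map_inv] at h
  exact mul_inv_eq_one.mp h

lemma R2 : C0 * T0 * C0⁻¹ = X0⁻¹ * T0 := by
  have h := relP (show c * t * c⁻¹ * (x⁻¹ * t)⁻¹ ∈ relsN from by right; left; rfl)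
  simp only [map_mul, map_inv] at h
  exact mul_inv_eq_one.mp h

lemma R3 : C0 * B0 * C0⁻¹ = X0⁻¹ * B0 := by
  have h := relP (show c * b * c⁻¹ * (x⁻¹ * b)⁻¹ ∈ relsN from by right; right; rfl)
  simp only [map_mul, map_inv] at h
  exact mul_inv_eq_one.mp h

def uf : Fin 4 → P := ![C0, T0, X0, X0 * B0 * X0⁻¹]

lemma hu : ∀ r ∈ relsN, FreeGroup.lift uf r = 1 := by
  rintro r (rfl | rfl | rfl) <;>
    simp only [map_mul, map_inv, FreeGroup.lift_apply_of, uf, Matrix.cons_val_zero, Matrix.cons_val_one,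
      Matrix.head_cons, Matrix.cons_val_two, Matrix.tail_cons, Matrix.cons_val_three]
  · -- C0 * X0 * C0⁻¹ * X0⁻¹ = 1  with uf c = C0, uf x = X0
    rw [mul_inv_eq_one]; exact R1
  · have e : C0 * (X0 * B0 * X0⁻¹) * C0⁻¹ = (C0 * X0 * C0⁻¹) * (C0 * B0 * C0⁻¹) * (C0 * X0 * C0⁻¹)⁻¹ := by
      group
    rw [R1, R3] at e
    rw [mul_inv_eq_one, e]; group
  · rw [mul_inv_eq_one]; exact R2

def u : P →* P := PresentedGroup.toGroup hu

lemma uC : u C0 = C0 := PresentedGroup.toGroup.of hu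
lemma uB : u B0 = T0 := PresentedGroup.toGroup.of hu
lemma uX : u X0 = X0 := PresentedGroup.toGroup.of hu
lemma uT : u T0 = X0 * B0 * X0⁻¹ := PresentedGroup.toGroup.of hu

lemma uu (p : P) : u (u p) = X0 * p * X0⁻¹ := by
  have h : u.comp u = (MulAut.conj X0).toMonoidHom := by
    apply PresentedGroup.ext
    intro i
    fin_cases i <;>
      simp only [MonoidHom.comp_apply, MulEquiv.coe_toMonoidHom, MulAut.conj_apply]
    · show u (u C0) = X0 * C0 * X0⁻¹
      have hcomm : C0 * X0 = X0 * C0 := by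
        have h := R1; rwa [mul_inv_eq_iff_eq_mul] at h
      rw [uC, uC, ← hcomm]; group
    · show u (u B0) = X0 * B0 * X0⁻¹
      rw [uB, uT]
    · show u (u X0) = X0 * X0 * X0⁻¹
      rw [uX, uX]; group
    · show u (u T0) = X0 * T0 * X0⁻¹
      rw [uT, map_mul, map_mul, map_inv, uX, uB]
  have := DFunLike.congr_fun h p
  simpa using this

@[ext] structure GG where
  fst : P
  snd : Bool

namespace GG

instance : One GG := ⟨⟨1, false⟩⟩
instance : Mul GG :=
  ⟨fun a b => ⟨a.fst * (cond a.snd (u b.fst) b.fst) * (cond (a.snd && b.snd) X0 1),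
    xor a.snd b.snd⟩⟩
instance : Inv GG := ⟨fun a => ⟨cond a.snd (X0⁻¹ * (u a.fst)⁻¹) a.fst⁻¹, a.snd⟩⟩

lemma mul_def (p q : P) (ε δ : Bool) :
    (⟨p, ε⟩ * ⟨q, δ⟩ : GG) = ⟨p * (cond ε (u q) q) * (cond (ε && δ) X0 1), xor ε δ⟩ := rfl
lemma inv_def (p : P) (ε : Bool) : (⟨p, ε⟩ : GG)⁻¹ = ⟨cond ε (X0⁻¹ * (u p)⁻¹) p⁻¹, ε⟩ := rfl
lemma one_def : (1 : GG) = ⟨(1 : P), false⟩ := rfl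

instance : Group GG where
  mul_assoc := by
    rintro ⟨p, (_ | _)⟩ ⟨q, (_ | _)⟩ ⟨r, (_ | _)⟩ <;>
      simp only [mul_def, Bool.xor_false, Bool.xor_true, Bool.false_xor, Bool.true_xor,
        Bool.false_and, Bool.true_and, Bool.and_false, Bool.and_true, Bool.not_true,
        Bool.not_false, cond_true, cond_false, GG.mk.injEq, map_mul, map_one, uu, uX,
        mul_one, one_mul] <;>
      constructor <;> first | rfl | group
  one_mul := by
    rintro ⟨p, ε⟩
    simp [one_def, mul_def]
  mul_one := by
    rintro ⟨p, ε⟩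
    cases ε <;> simp [one_def, mul_def]
  inv_mul_cancel := by
    rintro ⟨p, (_ | _)⟩ <;>
      simp only [inv_def, mul_def, cond_true, cond_false, Bool.and_self, Bool.xor_self, one_def,
        GG.mk.injEq, map_mul, map_inv, uu, uX] <;>
      constructor <;> first | rfl | group

end GG

/-- The embedding `P →* GG`. -/
def j : P →* GG := MonoidHom.mk' (fun p => ⟨p, false⟩) (fun p q => by simp [GG.mul_def])

lemma j_apply (p : P) : j p = ⟨p, false⟩ := rfl

lemma j_injective : Function.Injective j := fun p q h => congrArg GG.fst h

abbrev F2 := FreeGroup (Fin 2)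
def a2 : F2 := FreeGroup.of 0
def b2 : F2 := FreeGroup.of 1

def f1 : F2 →* GG := FreeGroup.lift ![⟨(1 : P), true⟩, ⟨B0, false⟩]
def cg : GG := ⟨C0, false⟩

lemma f1a : f1 a2 = ⟨1, true⟩ := by simp [f1, a2]
lemma f1b : f1 b2 = ⟨B0, false⟩ := by simp [f1, b2]

section Theta
variable {θ : MulAut F2} (hθa : θ (FreeGroup.of 0) = FreeGroup.of 0)
  (hθb : θ (FreeGroup.of 1) = (FreeGroup.of 0)⁻¹ ^ 2 * FreeGroup.of 1)

include hθa hθb in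
lemma base (w : F2) : f1 (θ w) = cg * f1 w * cg⁻¹ := by
  have h : f1.comp θ.toMonoidHom = (MulAut.conj cg).toMonoidHom.comp f1 := by
    apply FreeGroup.ext_hom
    intro i
    fin_cases i <;>
      simp only [MonoidHom.comp_apply, MulEquiv.coe_toMonoidHom, MulAut.conj_apply]
    · show f1 (θ a2) = cg * f1 a2 * cg⁻¹
      rw [show θ a2 = a2 from hθa, f1a]
      simp [cg, GG.mul_def, GG.inv_def, uC]
    · show f1 (θ b2) = cg * f1 b2 * cg⁻¹
      rw [show θ b2 = a2⁻¹ ^ 2 * b2 from hθb, map_mul, map_pow, map_inv, f1a, f1b, pow_two]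
      simp only [cg, GG.mul_def, GG.inv_def, cond_true, cond_false, Bool.and_self, Bool.and_false,
        Bool.false_and, Bool.and_true, Bool.true_and, Bool.xor_self, Bool.xor_false,
        Bool.false_xor, Bool.true_xor, map_one, map_inv, map_mul, inv_one, mul_one, one_mul, uX,
        GG.mk.injEq]
      refine ⟨?_, trivial⟩
      rw [R3]; group
  exact DFunLike.congr_fun h w
include hθa hθb in
lemma base_inv (w : F2) : f1 (θ⁻¹ w) = cg⁻¹ * f1 w * cg := by
  have h0 : θ (θ⁻¹ w) = w := by
    rw [← MulAut.mul_apply, mul_inv_cancel, MulAut.one_apply]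
  have h := base hθa hθb (θ⁻¹ w)
  rw [h0] at h
  rw [h]; group

include hθa hθb in
lemma key : ∀ n : ℤ, ∀ w : F2, f1 ((θ ^ n) w) = cg ^ n * f1 w * (cg ^ n)⁻¹ := by
  intro n
  induction n using Int.induction_on with
  | zero => intro w; simp
  | succ n ih =>
    intro w
    have h : (θ ^ ((n : ℤ) + 1)) w = (θ ^ (n : ℤ)) (θ w) := by
      rw [zpow_add_one, MulAut.mul_apply]
    rw [h, ih, base hθa hθb, zpow_add_one]
    group
  | pred n ih =>
    intro w
    have h : (θ ^ (-(n : ℤ) - 1)) w = (θ ^ (-(n : ℤ))) (θ⁻¹ w) := by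
      rw [zpow_sub_one, MulAut.mul_apply]
    rw [h, ih, base_inv hθa hθb, zpow_sub_one]
    group

include hθa hθb in
lemma hcomp : ∀ g : Multiplicative ℤ,
    f1.comp ((zpowersHom (MulAut F2) θ) g).toMonoidHom
      = (MulAut.conj ((zpowersHom GG cg) g)).toMonoidHom.comp f1 := by
  intro g
  refine MonoidHom.ext fun w => ?_
  simp only [MonoidHom.comp_apply, MulEquiv.coe_toMonoidHom, MulAut.conj_apply,
    zpowersHom_apply]
  exact key hθa hθb g.toAdd w

/-- The homomorphism `L →* GG`. -/
def Phi : (F2 ⋊[zpowersHom (MulAut F2) θ] Multiplicative ℤ) →* GG :=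
  SemidirectProduct.lift f1 (zpowersHom GG cg) (hcomp hθa hθb)

abbrev LL (θ : MulAut F2) := F2 ⋊[zpowersHom (MulAut F2) θ] Multiplicative ℤ

/-- images of the generators of `P` in `L`. -/
def lf (θ : MulAut F2) : Fin 4 → LL θ :=
  ![SemidirectProduct.inr (Multiplicative.ofAdd 1), SemidirectProduct.inl b2,
    SemidirectProduct.inl (a2 ^ 2), SemidirectProduct.inl (a2 * b2 * a2⁻¹)]

lemma conj1 (w : F2) :
    (SemidirectProduct.inr (Multiplicative.ofAdd (1 : ℤ)) : LL θ) * SemidirectProduct.inl w *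
      (SemidirectProduct.inr (Multiplicative.ofAdd (1 : ℤ)))⁻¹ = SemidirectProduct.inl (θ w) := by
  have h : ((zpowersHom (MulAut F2) θ) (Multiplicative.ofAdd (1 : ℤ))) = θ := by
    simp [zpowersHom_apply]
  rw [← map_inv, ← SemidirectProduct.inl_aut, h]

include hθa hθb in
lemma hlf : ∀ r ∈ relsN, FreeGroup.lift (lf θ) r = 1 := by
  rintro r (rfl | rfl | rfl) <;>
    simp only [map_mul, map_inv, FreeGroup.lift_apply_of, lf, Matrix.cons_val_zero, Matrix.cons_val_one,
      Matrix.head_cons, Matrix.cons_val_two, Matrix.tail_cons, Matrix.cons_val_three]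
  · rw [conj1, ← map_inv, ← map_mul,
      show θ (a2 ^ 2) * (a2 ^ 2)⁻¹ = 1 from by
        rw [map_pow, show θ a2 = a2 from hθa]; group,
      map_one]
  · have hm : (SemidirectProduct.inl a2 : LL θ) * SemidirectProduct.inl b2 *
        (SemidirectProduct.inl a2)⁻¹ = SemidirectProduct.inl (a2 * b2 * a2⁻¹) := by
      rw [map_mul, map_mul, map_inv]
    rw [hm, conj1, ← map_inv, ← map_mul, ← map_inv, ← map_mul,
      show θ (a2 * b2 * a2⁻¹) * ((a2 ^ 2)⁻¹ * (a2 * b2 * a2⁻¹))⁻¹ = 1 from by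
        rw [map_mul, map_mul, map_inv, show θ a2 = a2 from hθa,
          show θ b2 = a2⁻¹ ^ 2 * b2 from hθb]; group,
      map_one]
  · rw [conj1, ← map_inv, ← map_mul, ← map_inv, ← map_mul,
      show θ b2 * ((a2 ^ 2)⁻¹ * b2)⁻¹ = 1 from by
        rw [show θ b2 = a2⁻¹ ^ 2 * b2 from hθb]; group,
      map_one]
/-- The homomorphism `P →* L` realizing the presentation inside `L`. -/
def phi' : P →* LL θ := PresentedGroup.toGroup (hlf hθa hθb)

lemma phiC : phi' hθa hθb C0 = SemidirectProduct.inr (Multiplicative.ofAdd 1) :=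
  PresentedGroup.toGroup.of _
lemma phiB : phi' hθa hθb B0 = SemidirectProduct.inl b2 := PresentedGroup.toGroup.of _
lemma phiX : phi' hθa hθb X0 = SemidirectProduct.inl (a2 ^ 2) := PresentedGroup.toGroup.of _
lemma phiT : phi' hθa hθb T0 = SemidirectProduct.inl (a2 * b2 * a2⁻¹) :=
  PresentedGroup.toGroup.of _

include hθa hθb in
lemma conjA (p : P) :
    phi' hθa hθb (u p) = SemidirectProduct.inl a2 * phi' hθa hθb p *
      (SemidirectProduct.inl a2)⁻¹ := by
  have h : (phi' hθa hθb).comp u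
      = (MulAut.conj (SemidirectProduct.inl a2 : LL θ)).toMonoidHom.comp (phi' hθa hθb) := by
    apply PresentedGroup.ext
    intro i
    fin_cases i <;>
      simp only [MonoidHom.comp_apply, MulEquiv.coe_toMonoidHom, MulAut.conj_apply]
    · show phi' hθa hθb (u C0) = _ * phi' hθa hθb C0 * _
      rw [uC, phiC]
      have h2 := conj1 (θ := θ) a2⁻¹
      rw [show θ a2⁻¹ = a2⁻¹ from by rw [map_inv, show θ a2 = a2 from hθa], map_inv] at h2
      rw [mul_inv_eq_iff_eq_mul] at h2
      -- h2 : inr * (inl a2)⁻¹ = (inl a2)⁻¹ * inr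
      rw [mul_assoc, h2]
      group
    · show phi' hθa hθb (u B0) = _ * phi' hθa hθb B0 * _
      rw [uB, phiT, phiB, map_mul, map_mul, map_inv]
    · show phi' hθa hθb (u X0) = _ * phi' hθa hθb X0 * _
      rw [uX, phiX, ← map_inv, ← map_mul, ← map_mul]
      congr 1
      group
    · show phi' hθa hθb (u T0) = _ * phi' hθa hθb T0 * _
      rw [uT, map_mul, map_mul, map_inv, phiX, phiB, phiT,
        ← map_inv, ← map_mul, ← map_mul, ← map_inv, ← map_mul, ← map_mul]
      congr 1
  exact DFunLike.congr_fun h p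

/-- The retraction `GG →* L`. -/
def gmap : GG →* LL θ :=
  MonoidHom.mk' (fun gp => phi' hθa hθb gp.fst * cond gp.snd (SemidirectProduct.inl a2) 1)
    (by
      rintro ⟨p, (_ | _)⟩ ⟨q, (_ | _)⟩ <;>
        simp only [GG.mul_def, cond_true, cond_false, Bool.and_self, Bool.and_false,
          Bool.false_and, Bool.and_true, Bool.true_and, Bool.xor_self, Bool.xor_false,
          Bool.false_xor, Bool.true_xor, map_mul, map_one, mul_one, one_mul]
      · rw [mul_assoc]
      · rw [conjA hθa hθb]; group
      · rw [conjA hθa hθb, phiX, show (SemidirectProduct.inl (a2 ^ 2) : LL θ)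
            = SemidirectProduct.inl a2 * SemidirectProduct.inl a2 from by
          rw [← map_mul, ← pow_two]]
        group)

lemma gmap_apply (p : P) (ε : Bool) :
    gmap hθa hθb ⟨p, ε⟩ = phi' hθa hθb p * cond ε (SemidirectProduct.inl a2) 1 := rfl

include hθa hθb in
lemma gmap_Phi : (gmap hθa hθb).comp (Phi hθa hθb) = MonoidHom.id (LL θ) := by
  apply SemidirectProduct.hom_ext
  · apply FreeGroup.ext_hom
    intro i
    fin_cases i <;> simp only [MonoidHom.comp_apply, MonoidHom.id_apply]
    · show gmap hθa hθb (Phi hθa hθb (SemidirectProduct.inl a2)) = SemidirectProduct.inl a2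
      rw [Phi, SemidirectProduct.lift_inl, f1a, gmap_apply, map_one, one_mul, cond_true]
    · show gmap hθa hθb (Phi hθa hθb (SemidirectProduct.inl b2)) = SemidirectProduct.inl b2
      rw [Phi, SemidirectProduct.lift_inl, f1b, gmap_apply, phiB, cond_false, mul_one]
  · apply MonoidHom.ext_mint
    simp only [MonoidHom.comp_apply, MonoidHom.id_apply]
    show gmap hθa hθb (Phi hθa hθb (SemidirectProduct.inr (Multiplicative.ofAdd 1))) = _
    rw [Phi, SemidirectProduct.lift_inr,
      show (zpowersHom GG cg) (Multiplicative.ofAdd 1) = cg from by simp [zpowersHom_apply],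
      show cg = (⟨C0, false⟩ : GG) from rfl, gmap_apply, phiC, cond_false, mul_one]

include hθa hθb in
lemma Phi_phi' : (Phi hθa hθb).comp (phi' hθa hθb) = j := by
  apply PresentedGroup.ext
  intro i
  fin_cases i <;> simp only [MonoidHom.comp_apply]
  · show Phi hθa hθb (phi' hθa hθb C0) = j C0
    rw [phiC, Phi, SemidirectProduct.lift_inr,
      show (zpowersHom GG cg) (Multiplicative.ofAdd 1) = cg from by simp [zpowersHom_apply]]
    rfl
  · show Phi hθa hθb (phi' hθa hθb B0) = j B0
    rw [phiB, Phi, SemidirectProduct.lift_inl, f1b, j_apply]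
  · show Phi hθa hθb (phi' hθa hθb X0) = j X0
    rw [phiX, Phi, SemidirectProduct.lift_inl, pow_two, map_mul, f1a, j_apply, GG.mul_def]
    simp [uu, uX]
  · show Phi hθa hθb (phi' hθa hθb T0) = j T0
    rw [phiT, Phi, SemidirectProduct.lift_inl, map_mul, map_mul, map_inv, f1a, f1b, j_apply]
    rw [show (⟨(1 : P), true⟩ : GG)⁻¹ = ⟨X0⁻¹, true⟩ from by
      rw [GG.inv_def]; simp]
    rw [GG.mul_def, GG.mul_def]
    simp [uB, uX]

end Theta


/-- The parity homomorphism `GG →* Multiplicative (ZMod 2)`. -/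
def pr : GG →* Multiplicative (ZMod 2) :=
  MonoidHom.mk' (fun gp => Multiplicative.ofAdd (cond gp.snd 1 0))
    (by rintro ⟨p, (_ | _)⟩ ⟨q, (_ | _)⟩ <;> simp [GG.mul_def] <;> rfl)

theorem kernel_index_two_and_presentation
    (θ : MulAut (FreeGroup (Fin 2)))
    (hθa : θ (FreeGroup.of 0) = FreeGroup.of 0)
    (hθb : θ (FreeGroup.of 1) = (FreeGroup.of 0)⁻¹ ^ 2 * FreeGroup.of 1)
    (f : FreeGroup (Fin 2) ⋊[zpowersHom (MulAut (FreeGroup (Fin 2))) θ]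
          Multiplicative ℤ →* Multiplicative (ZMod 2))
    (hfa : f (SemidirectProduct.inl (FreeGroup.of 0)) = Multiplicative.ofAdd 1)
    (hfb : f (SemidirectProduct.inl (FreeGroup.of 1)) = 1)
    (hfc : f (SemidirectProduct.inr (Multiplicative.ofAdd (1 : ℤ))) = 1) :
    f.ker.index = 2 ∧ Nonempty (PresentedGroup relsN ≃* f.ker) := by
  have hfa' : f (SemidirectProduct.inl a2) = Multiplicative.ofAdd 1 := hfa
  have hfb' : f (SemidirectProduct.inl b2) = 1 := hfb
  have hpr : pr.comp (Phi hθa hθb) = f := by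
    apply SemidirectProduct.hom_ext
    · apply FreeGroup.ext_hom
      intro i
      fin_cases i <;> simp only [MonoidHom.comp_apply]
      · show pr (Phi hθa hθb (SemidirectProduct.inl a2)) = f (SemidirectProduct.inl a2)
        rw [show f (SemidirectProduct.inl a2) = Multiplicative.ofAdd 1 from hfa,
          Phi, SemidirectProduct.lift_inl, f1a]
        rfl
      · show pr (Phi hθa hθb (SemidirectProduct.inl b2)) = f (SemidirectProduct.inl b2)
        rw [show f (SemidirectProduct.inl b2) = 1 from hfb,
          Phi, SemidirectProduct.lift_inl, f1b]
        rfl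
    · apply MonoidHom.ext_mint
      simp only [MonoidHom.comp_apply]
      rw [hfc, Phi, SemidirectProduct.lift_inr,
        show (zpowersHom GG cg) (Multiplicative.ofAdd 1) = cg from by simp [zpowersHom_apply]]
      rfl
  constructor
  · rw [Subgroup.index_ker]
    have hr : f.range = ⊤ := by
      rw [MonoidHom.range_eq_top]
      intro y
      have hy : ∀ z : Multiplicative (ZMod 2), z = 1 ∨ z = Multiplicative.ofAdd 1 := by decide
      rcases hy y with h | h
      · exact ⟨1, by rw [map_one, h]⟩
      · exact ⟨SemidirectProduct.inl a2, by rw [hfa', h]⟩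
    rw [hr, Subgroup.card_top, Nat.card_eq_fintype_card]
    rfl
  · have hker : ∀ p : P, phi' hθa hθb p ∈ f.ker := by
      have h1 : f.comp (phi' hθa hθb) = 1 := by
        apply PresentedGroup.ext
        intro i
        fin_cases i <;> simp only [MonoidHom.comp_apply, MonoidHom.one_apply]
        · show f (phi' hθa hθb C0) = 1
          rw [phiC]; exact hfc
        · show f (phi' hθa hθb B0) = 1
          rw [phiB]; exact hfb
        · show f (phi' hθa hθb X0) = 1
          rw [phiX, show (SemidirectProduct.inl (a2 ^ 2) :
              FreeGroup (Fin 2) ⋊[zpowersHom (MulAut (FreeGroup (Fin 2))) θ] Multiplicative ℤ)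
              = SemidirectProduct.inl a2 * SemidirectProduct.inl a2 from by
            rw [← map_mul, ← pow_two], map_mul, hfa']
          decide
        · show f (phi' hθa hθb T0) = 1
          rw [phiT, show (SemidirectProduct.inl (a2 * b2 * a2⁻¹) :
              FreeGroup (Fin 2) ⋊[zpowersHom (MulAut (FreeGroup (Fin 2))) θ] Multiplicative ℤ)
              = SemidirectProduct.inl a2 * SemidirectProduct.inl b2 *
                (SemidirectProduct.inl a2)⁻¹ from by
            rw [map_mul, map_mul, map_inv], map_mul, map_mul, map_inv, hfa', hfb']
          group
      intro p
      exact DFunLike.congr_fun h1 p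
    have hsnd : ∀ n, n ∈ f.ker → (Phi hθa hθb n).snd = false := by
      intro n hn
      have h2 : pr (Phi hθa hθb n) = 1 := by
        rw [← MonoidHom.comp_apply, hpr]
        exact hn
      rcases hPn : Phi hθa hθb n with ⟨pn, (_ | _)⟩
      · rfl
      · rw [hPn] at h2
        have h2' : Multiplicative.ofAdd (1 : ZMod 2) = 1 := h2
        exact absurd h2' (by decide)
    refine ⟨MulEquiv.ofBijective ((phi' hθa hθb).codRestrict f.ker hker) ⟨?_, ?_⟩⟩
    · intro p q hpq
      have h3 : phi' hθa hθb p = phi' hθa hθb q := congrArg Subtype.val hpq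
      have h4 : j p = j q := by
        rw [← Phi_phi' hθa hθb, MonoidHom.comp_apply, MonoidHom.comp_apply, h3]
      exact j_injective h4
    · rintro ⟨n, hn⟩
      rcases hPn : Phi hθa hθb n with ⟨pn, εn⟩
      have hε : εn = false := by
        have := hsnd n hn
        rw [hPn] at this
        exact this
      refine ⟨pn, Subtype.ext ?_⟩
      show phi' hθa hθb pn = n
      have h5 : gmap hθa hθb (Phi hθa hθb n) = n := by
        rw [← MonoidHom.comp_apply, gmap_Phi]
        rfl
      rw [hPn, hε] at h5
      rw [gmap_apply, cond_false, mul_one] at h5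
      exact h5

end Stmt15
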